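/- Let f : ℝ^m → ℝ be convex and differentiable, let ŷ be a global minimizer of f, and let x̄ : ℝ≥0 → ℝ^m be C¹ with d/dt ‖x̄(t) - ŷ‖² ≤ ω(t) for a function ω with ∫₀^∞ |ω(t)|dt < ∞. If there exists a sequence t_k → ∞ with x̄(t_k) → ŷ, then lim_{t→∞} x̄(t) = ŷ. -/

import Mathlib

open Real Filter MeasureTheory

/-- Quasi-monotone convergence: if `d/dt ‖x̄(t) - ŷ‖²` is bounded by an
absolutely integrable perturbation `ω` and some sequence `x̄(t_k) → ŷ` with
`t_k → ∞`, then `x̄(t) → ŷ`. -/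
theorem quasi_monotone_convergence
    (m : ℕ)
    (f : EuclideanSpace ℝ (Fin m) → ℝ)
    (hconv : ConvexOn ℝ Set.univ f)
    (hdiff : Differentiable ℝ f)
    (yhat : EuclideanSpace ℝ (Fin m))
    (hmin : ∀ y, f yhat ≤ f y)
    (xbar : ℝ → EuclideanSpace ℝ (Fin m))
    (hC1 : ContDiff ℝ 1 xbar)
    (d ω : ℝ → ℝ)
    (hd : ∀ t ≥ (0:ℝ), HasDerivAt (fun s => ‖xbar s - yhat‖ ^ 2) (d t) t)
    (hdω : ∀ t ≥ (0:ℝ), d t ≤ ω t)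
    (hωint : IntegrableOn (fun t => |ω t|) (Set.Ici (0:ℝ)))
    (t : ℕ → ℝ) (ht : Tendsto t atTop atTop)
    (hsub : Tendsto (fun k => xbar (t k)) atTop (nhds yhat)) :
    Tendsto xbar atTop (nhds yhat) := by
  set g : ℝ → ℝ := fun s => ‖xbar s - yhat‖ ^ 2 with hg
  set G : ℝ → ℝ := fun s => ∫ u in (0:ℝ)..s, |ω u| with hG
  have hgcont : Continuous g := by
    have : Continuous xbar := hC1.continuous
    exact (this.sub continuous_const).norm.pow 2
  -- key monotonicity inequality
  have key : ∀ a b : ℝ, 0 ≤ a → a ≤ b → g b - G b ≤ g a - G a := by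
    intro a b ha hab
    have hint : IntegrableOn (fun u => |ω u|) (Set.Icc a b) :=
      hωint.mono_set (fun x hx => le_trans ha hx.1)
    have h1 : g b - g a ≤ ∫ u in a..b, |ω u| := by
      apply intervalIntegral.sub_le_integral_of_hasDeriv_right_of_le hab (hgcont.continuousOn)
        (fun x hx => ((hd x (le_trans ha hx.1.le)).hasDerivWithinAt)) hint
      intro x hx
      exact le_trans (hdω x (le_trans ha hx.1.le)) (le_abs_self _)
    have h2 : G b - G a = ∫ u in a..b, |ω u| := by
      simp only [hG]
      rw [← intervalIntegral.integral_add_adjacent_intervals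
        (a := (0:ℝ)) (b := a) (c := b) ?_ ?_]
      · ring_nf
      · exact (hωint.mono_set (fun x hx => Set.mem_of_mem_of_subset hx
          (by rw [Set.uIcc_of_le ha]; exact fun y hy => hy.1))).intervalIntegrable
      · exact IntegrableOn.intervalIntegrable (by rwa [Set.uIcc_of_le hab])
    linarith
  -- G tends to its improper integral
  have hGtend : Tendsto G atTop (nhds (∫ u in Set.Ioi (0:ℝ), |ω u|)) :=
    intervalIntegral_tendsto_integral_Ioi 0 (hωint.mono_set Set.Ioi_subset_Ici_self) tendsto_id
  set I := ∫ u in Set.Ioi (0:ℝ), |ω u| with hI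
  -- g (t k) → 0
  have hgk : Tendsto (fun k => g (t k)) atTop (nhds 0) := by
    have : Tendsto (fun k => ‖xbar (t k) - yhat‖) atTop (nhds 0) := by
      have := (tendsto_iff_norm_sub_tendsto_zero).mp hsub
      simpa using this
    have := this.pow 2
    simpa using this
  have hhk : Tendsto (fun k => g (t k) - G (t k)) atTop (nhds (-I)) := by
    have := hgk.sub (hGtend.comp ht)
    simpa using this
  -- lower bound: for all s ≥ 0, g s - G s ≥ -I
  have hlow : ∀ s : ℝ, 0 ≤ s → -I ≤ g s - G s := by
    intro s hs
    refine le_of_tendsto hhk ?_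
    filter_upwards [ht.eventually_ge_atTop s] with k hk
    exact key s (t k) hs hk
  -- h tends to -I
  have hh : Tendsto (fun s => g s - G s) atTop (nhds (-I)) := by
    rw [Metric.tendsto_atTop] at hhk ⊢
    intro ε hε
    obtain ⟨N, hN⟩ := hhk ε hε
    obtain ⟨k, hk0, hkd⟩ : ∃ k ≥ N, 0 ≤ t k := by
      obtain ⟨k, hk⟩ := (ht.eventually_ge_atTop 0).exists_forall_of_atTop
      exact ⟨max N k, le_max_left _ _, hk _ (le_max_right _ _)⟩
    refine ⟨max (t k) 0, fun s hs => ?_⟩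
    have hs0 : (0:ℝ) ≤ s := le_trans (le_max_right _ _) hs
    have h1 : g s - G s ≤ g (t k) - G (t k) := key (t k) s hkd (le_trans (le_max_left _ _) hs)
    have h2 := hN k hk0
    have h3 := hlow s hs0
    rw [Real.dist_eq] at h2 ⊢
    rw [abs_lt] at h2 ⊢
    constructor <;> linarith
  -- hence g → 0
  have hg0 : Tendsto g atTop (nhds 0) := by
    have := hh.add hGtend
    simpa using this
  -- conclude
  rw [tendsto_iff_norm_sub_tendsto_zero]
  have : Tendsto (fun s => Real.sqrt (g s)) atTop (nhds 0) := by
    have := (Real.continuous_sqrt.tendsto 0).comp hg0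
    simpa [Function.comp_def] using this
  refine this.congr (fun s => ?_)
  rw [hg]
  simp [Real.sqrt_sq_eq_abs]
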